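/- Min–max entropy chain inequality: for random variables X, Y, Z on finite sets and ε, ε' ≥ 0 with ε + ε' < 1, H_min^{ε}(X | Z) − H_max^{ε'}(X | Y,Z) ≤ H_min^{ε+ε'}(Y | Z). -/

import Mathlib

open scoped Classical
open Finset Real

/-- Probability of event `E` under distribution `p` on sample space `Ω`. -/
noncomputable def prE {Ω : Type*} [Fintype Ω] (p : Ω → ℝ) (E : Finset Ω) : ℝ :=
  ∑ ω ∈ E, p ω

/-- Sub-normalized joint mass P(f = a, g = b, Ω-event E); note
`P_Y(b) · P_{XΩ|Y=b}(a) = P(X=a, Y=b, E)` under the paper's conventions. -/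
noncomputable def jointE {Ω A B : Type*} [Fintype Ω] (p : Ω → ℝ) (f : Ω → A) (g : Ω → B)
    (E : Finset Ω) (a : A) (b : B) : ℝ :=
  ∑ ω ∈ E, if f ω = a ∧ g ω = b then p ω else 0

/-- Smooth conditional min-entropy
`H_min^ε(f|g) = max_{Ω : Pr[Ω] ≥ 1-ε} −log₂ ∑_b P_g(b) max_a P_{fΩ|g=b}(a)`. -/
noncomputable def HminSm {Ω A B : Type*} [Fintype Ω] [Fintype A] [Fintype B] [Nonempty A]
    (p : Ω → ℝ) (f : Ω → A) (g : Ω → B) (ε : ℝ) : ℝ :=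
  sSup { r | ∃ E : Finset Ω, 1 - ε ≤ prE p E ∧
    r = -Real.logb 2 (∑ b : B,
      Finset.univ.sup' Finset.univ_nonempty (fun a => jointE p f g E a b)) }

/-- Smooth conditional max-entropy
`H_max^ε(f|g) = min_{Ω : Pr[Ω] ≥ 1-ε} max_b log₂ |supp P_{fΩ|g=b}|`. -/
noncomputable def HmaxSm {Ω A B : Type*} [Fintype Ω] [Fintype A] [Fintype B] [Nonempty B]
    (p : Ω → ℝ) (f : Ω → A) (g : Ω → B) (ε : ℝ) : ℝ :=
  sInf { r | ∃ E : Finset Ω, 1 - ε ≤ prE p E ∧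
    r = Finset.univ.sup' Finset.univ_nonempty (fun b =>
      Real.logb 2 ((Finset.univ.filter (fun a => 0 < jointE p f g E a b)).card)) }

/-- `p` is a probability distribution. -/
def IsDist {Ω : Type*} [Fintype Ω] (p : Ω → ℝ) : Prop :=
  (∀ ω, 0 ≤ p ω) ∧ ∑ ω, p ω = 1

section Aux

variable {Ω A B : Type*} [Fintype Ω] {p : Ω → ℝ}

lemma jointE_nonneg (hp0 : ∀ ω, 0 ≤ p ω) (f : Ω → A) (g : Ω → B) (E : Finset Ω)
    (a : A) (b : B) : 0 ≤ jointE p f g E a b := by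
  refine Finset.sum_nonneg fun ω _ => ?_
  split
  · exact hp0 ω
  · exact le_refl 0

lemma jointE_mono (hp0 : ∀ ω, 0 ≤ p ω) (f : Ω → A) (g : Ω → B) {E E' : Finset Ω}
    (hEE : E ⊆ E') (a : A) (b : B) : jointE p f g E a b ≤ jointE p f g E' a b := by
  refine Finset.sum_le_sum_of_subset_of_nonneg hEE fun ω _ _ => ?_
  split
  · exact hp0 ω
  · exact le_refl 0

lemma self_le_jointE (hp0 : ∀ ω, 0 ≤ p ω) (f : Ω → A) (g : Ω → B) {E : Finset Ω}
    {ω : Ω} (hω : ω ∈ E) : p ω ≤ jointE p f g E (f ω) (g ω) := by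
  have h := Finset.single_le_sum (f := fun ω' => if f ω' = f ω ∧ g ω' = g ω then p ω' else 0)
    (fun ω' _ => by split; exacts [hp0 ω', le_refl 0]) hω
  simpa [jointE] using h

variable [Fintype A] [Fintype B]

lemma sup'_jointE_nonneg [Nonempty A] (hp0 : ∀ ω, 0 ≤ p ω) (f : Ω → A) (g : Ω → B)
    (E : Finset Ω) (b : B) :
    0 ≤ Finset.univ.sup' Finset.univ_nonempty (fun a => jointE p f g E a b) :=
  le_trans (jointE_nonneg hp0 f g E (Classical.arbitrary A) b)
    (Finset.le_sup' (fun a => jointE p f g E a b) (Finset.mem_univ _))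

lemma sumSup_pos [Nonempty A] (hp0 : ∀ ω, 0 ≤ p ω) (f : Ω → A) (g : Ω → B)
    (E : Finset Ω) (hE : 0 < prE p E) :
    0 < ∑ b : B, Finset.univ.sup' Finset.univ_nonempty (fun a => jointE p f g E a b) := by
  have : (0 : ℝ) = ∑ ω ∈ E, 0 := by simp
  rw [prE, this] at hE
  obtain ⟨ω, hωE, hωp⟩ := Finset.exists_lt_of_sum_lt hE
  have h1 : p ω ≤ jointE p f g E (f ω) (g ω) := self_le_jointE hp0 f g hωE
  have h2 : jointE p f g E (f ω) (g ω) ≤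
      Finset.univ.sup' Finset.univ_nonempty (fun a => jointE p f g E a (g ω)) :=
    Finset.le_sup' (fun a => jointE p f g E a (g ω)) (Finset.mem_univ _)
  have h3 := Finset.single_le_sum
    (f := fun b => Finset.univ.sup' Finset.univ_nonempty (fun a => jointE p f g E a b))
    (fun b _ => sup'_jointE_nonneg hp0 f g E b) (Finset.mem_univ (g ω))
  linarith

end Aux

/-- splitting the (Y,Z) joint mass according to the value of X -/
lemma jointE_split {Ω X Y Z : Type*} [Fintype Ω] [Fintype X]
    (p : Ω → ℝ) (fX : Ω → X) (fY : Ω → Y) (fZ : Ω → Z) (E : Finset Ω) (y : Y) (z : Z) :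
    jointE p fY fZ E y z =
      ∑ x : X, jointE p fX (fun ω => (fY ω, fZ ω)) E x (y, z) := by
  unfold jointE
  rw [Finset.sum_comm]
  refine Finset.sum_congr rfl fun ω _ => ?_
  by_cases h : fY ω = y ∧ fZ ω = z
  · simp [h, Prod.ext_iff, Finset.sum_ite_eq]
  · simp [h, Prod.ext_iff]

/-- Min–max entropy chain inequality:
`H_min^ε(X | Z) − H_max^{ε'}(X | Y,Z) ≤ H_min^{ε+ε'}(Y | Z)`. -/
theorem statement8 {Ω X Y Z : Type*} [Fintype Ω]
    [Fintype X] [Fintype Y] [Fintype Z] [Nonempty X] [Nonempty Y] [Nonempty Z]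
    (p : Ω → ℝ) (hp : IsDist p)
    (fX : Ω → X) (fY : Ω → Y) (fZ : Ω → Z)
    (ε ε' : ℝ) (hε : 0 ≤ ε) (hε' : 0 ≤ ε') (hsum : ε + ε' < 1) :
    HminSm p fX fZ ε - HmaxSm p fX (fun ω => (fY ω, fZ ω)) ε' ≤
      HminSm p fY fZ (ε + ε') := by
  classical
  obtain ⟨hp0, hp1⟩ := hp
  set g2 : Ω → Y × Z := fun ω => (fY ω, fZ ω) with hg2
  -- the three candidate sets
  set S1 : Set ℝ := { r | ∃ E : Finset Ω, 1 - ε ≤ prE p E ∧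
    r = -Real.logb 2 (∑ b : Z,
      Finset.univ.sup' Finset.univ_nonempty (fun a => jointE p fX fZ E a b)) } with hS1
  set S2 : Set ℝ := { r | ∃ E : Finset Ω, 1 - ε' ≤ prE p E ∧
    r = Finset.univ.sup' Finset.univ_nonempty (fun b : Y × Z =>
      Real.logb 2 ((Finset.univ.filter (fun a => 0 < jointE p fX g2 E a b)).card)) } with hS2
  set S3 : Set ℝ := { r | ∃ E : Finset Ω, 1 - (ε + ε') ≤ prE p E ∧
    r = -Real.logb 2 (∑ b : Z,
      Finset.univ.sup' Finset.univ_nonempty (fun a => jointE p fY fZ E a b)) } with hS3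
  have hprE_univ : prE p Finset.univ = 1 := hp1
  -- finiteness
  have hfin1 : S1.Finite := by
    apply Set.Finite.subset (Set.finite_range (fun E : Finset Ω =>
      -Real.logb 2 (∑ b : Z,
        Finset.univ.sup' Finset.univ_nonempty (fun a => jointE p fX fZ E a b))))
    rintro r ⟨E, _, rfl⟩; exact ⟨E, rfl⟩
  have hfin2 : S2.Finite := by
    apply Set.Finite.subset (Set.finite_range (fun E : Finset Ω =>
      Finset.univ.sup' Finset.univ_nonempty (fun b : Y × Z =>
        Real.logb 2 ((Finset.univ.filter (fun a => 0 < jointE p fX g2 E a b)).card))))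
    rintro r ⟨E, _, rfl⟩; exact ⟨E, rfl⟩
  have hfin3 : S3.Finite := by
    apply Set.Finite.subset (Set.finite_range (fun E : Finset Ω =>
      -Real.logb 2 (∑ b : Z,
        Finset.univ.sup' Finset.univ_nonempty (fun a => jointE p fY fZ E a b))))
    rintro r ⟨E, _, rfl⟩; exact ⟨E, rfl⟩
  have hne1 : S1.Nonempty := ⟨_, Finset.univ, by rw [hprE_univ]; linarith, rfl⟩
  have hne2 : S2.Nonempty := ⟨_, Finset.univ, by rw [hprE_univ]; linarith, rfl⟩
  -- pick optimal events
  have hmem1 : sSup S1 ∈ S1 := hne1.csSup_mem hfin1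
  have hmem2 : sInf S2 ∈ S2 := hne2.csInf_mem hfin2
  obtain ⟨E1, hE1pr, hE1eq⟩ := hmem1
  obtain ⟨E2, hE2pr, hE2eq⟩ := hmem2
  have hHmin1 : HminSm p fX fZ ε = sSup S1 := rfl
  have hHmax2 : HmaxSm p fX g2 ε' = sInf S2 := rfl
  have hHmin3 : HminSm p fY fZ (ε + ε') = sSup S3 := rfl
  set E3 : Finset Ω := E1 ∩ E2 with hE3
  -- prE of intersection
  have hE3pr : 1 - (ε + ε') ≤ prE p E3 := by
    have hunion : prE p (E1 ∪ E2) ≤ 1 := by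
      rw [← hprE_univ]
      exact Finset.sum_le_sum_of_subset_of_nonneg (Finset.subset_univ _) fun ω _ _ => hp0 ω
    have h := Finset.sum_union_inter (s₁ := E1) (s₂ := E2) (f := p)
    have : prE p (E1 ∪ E2) + prE p E3 = prE p E1 + prE p E2 := h
    linarith
  -- abbreviations
  set A1 : ℝ := ∑ b : Z, Finset.univ.sup' Finset.univ_nonempty (fun a => jointE p fX fZ E1 a b)
    with hA1
  set A3 : ℝ := ∑ b : Z, Finset.univ.sup' Finset.univ_nonempty (fun a => jointE p fY fZ E3 a b)
    with hA3
  set H : ℝ := Finset.univ.sup' Finset.univ_nonempty (fun b : Y × Z =>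
    Real.logb 2 ((Finset.univ.filter (fun a => 0 < jointE p fX g2 E2 a b)).card)) with hH
  have hA1pos : 0 < A1 := sumSup_pos hp0 fX fZ E1 (by linarith)
  have hA3pos : 0 < A3 := sumSup_pos hp0 fY fZ E3 (by linarith)
  set C : ℝ := (2 : ℝ) ^ H with hC
  have hCpos : 0 < C := Real.rpow_pos_of_pos (by norm_num) H
  -- each support cardinality is at most C
  have hcard : ∀ b : Y × Z,
      (((Finset.univ.filter (fun a => 0 < jointE p fX g2 E2 a b)).card : ℝ)) ≤ C := by
    intro b
    set n := (Finset.univ.filter (fun a => 0 < jointE p fX g2 E2 a b)).card with hn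
    rcases Nat.eq_zero_or_pos n with h0 | h1
    · rw [h0]; exact_mod_cast hCpos.le
    · have hnpos : (0 : ℝ) < n := by exact_mod_cast h1
      have hle : Real.logb 2 n ≤ H := Finset.le_sup'
        (f := fun b : Y × Z =>
          Real.logb 2 ((Finset.univ.filter (fun a => 0 < jointE p fX g2 E2 a b)).card))
        (Finset.mem_univ b)
      calc (n : ℝ) = (2 : ℝ) ^ Real.logb 2 (n : ℝ) :=
            (Real.rpow_logb (by norm_num) (by norm_num) hnpos).symm
        _ ≤ C := Real.rpow_le_rpow_of_exponent_le (by norm_num) hle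
  -- key per-z bound
  have hkey : ∀ z : Z,
      Finset.univ.sup' Finset.univ_nonempty (fun y => jointE p fY fZ E3 y z) ≤
        C * Finset.univ.sup' Finset.univ_nonempty (fun x => jointE p fX fZ E1 x z) := by
    intro z
    set Mz : ℝ := Finset.univ.sup' Finset.univ_nonempty (fun x => jointE p fX fZ E1 x z) with hMz
    have hMz0 : 0 ≤ Mz := sup'_jointE_nonneg hp0 fX fZ E1 z
    refine Finset.sup'_le _ _ fun y _ => ?_
    -- bound jointE p fY fZ E3 y z
    have hsplit := jointE_split p fX fY fZ E3 y z
    set Sf : Finset X := Finset.univ.filter (fun a => 0 < jointE p fX g2 E2 a (y, z)) with hSf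
    -- terms outside Sf vanish
    have hzero : ∀ x ∈ (Finset.univ : Finset X), x ∉ Sf →
        jointE p fX g2 E3 x (y, z) = 0 := by
      intro x _ hx
      rw [hSf, Finset.mem_filter] at hx
      push_neg at hx
      have h2 : jointE p fX g2 E2 x (y, z) ≤ 0 := hx (Finset.mem_univ x)
      have h3 : jointE p fX g2 E3 x (y, z) ≤ jointE p fX g2 E2 x (y, z) :=
        jointE_mono hp0 fX g2 (Finset.inter_subset_right) x (y, z)
      have h4 : 0 ≤ jointE p fX g2 E3 x (y, z) := jointE_nonneg hp0 fX g2 E3 x (y, z)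
      linarith
    have hsum_eq : ∑ x : X, jointE p fX g2 E3 x (y, z) =
        ∑ x ∈ Sf, jointE p fX g2 E3 x (y, z) :=
      (Finset.sum_subset (Finset.subset_univ Sf) hzero).symm
    -- each term in Sf is at most Mz
    have hterm : ∀ x ∈ Sf, jointE p fX g2 E3 x (y, z) ≤ Mz := by
      intro x _
      have h1 : jointE p fX g2 E3 x (y, z) ≤ jointE p fX fZ E3 x z := by
        refine Finset.sum_le_sum fun ω _ => ?_
        by_cases h : fX ω = x ∧ g2 ω = (y, z)
        · have h' : fX ω = x ∧ fZ ω = z := ⟨h.1, congrArg Prod.snd h.2⟩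
          simp [h, h']
        · simp only [h, if_false]
          split
          · exact hp0 ω
          · exact le_refl 0
      have h2 : jointE p fX fZ E3 x z ≤ jointE p fX fZ E1 x z :=
        jointE_mono hp0 fX fZ (Finset.inter_subset_left) x z
      have h3 : jointE p fX fZ E1 x z ≤ Mz :=
        Finset.le_sup' (fun x => jointE p fX fZ E1 x z) (Finset.mem_univ x)
      linarith
    calc jointE p fY fZ E3 y z = ∑ x ∈ Sf, jointE p fX g2 E3 x (y, z) := by
          rw [hsplit, hsum_eq]
      _ ≤ ∑ _x ∈ Sf, Mz := Finset.sum_le_sum hterm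
      _ = (Sf.card : ℝ) * Mz := by rw [Finset.sum_const, nsmul_eq_mul]
      _ ≤ C * Mz := mul_le_mul_of_nonneg_right (hcard (y, z)) hMz0
  have hA3le : A3 ≤ C * A1 := by
    rw [hA3, hA1, Finset.mul_sum]
    exact Finset.sum_le_sum fun z _ => hkey z
  -- log arithmetic
  have hlog : Real.logb 2 A3 ≤ H + Real.logb 2 A1 := by
    have h1 : Real.logb 2 A3 ≤ Real.logb 2 (C * A1) :=
      Real.logb_le_logb_of_le (by norm_num) hA3pos hA3le
    have h2 : Real.logb 2 (C * A1) = Real.logb 2 C + Real.logb 2 A1 :=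
      Real.logb_mul (ne_of_gt hCpos) (ne_of_gt hA1pos)
    have h3 : Real.logb 2 C = H := Real.logb_rpow (by norm_num) (by norm_num)
    linarith
  -- assemble
  have hstep : -Real.logb 2 A3 ≤ HminSm p fY fZ (ε + ε') := by
    rw [hHmin3]
    exact le_csSup hfin3.bddAbove ⟨E3, hE3pr, rfl⟩
  rw [hHmin1, hHmax2, hE1eq, hE2eq]
  linarith
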